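/- Let R = ℤ[t,t⁻¹], S₁ = [[-t, 1], [0, 1]] and S₂⁻¹ = [[1, 0], [1, -t⁻¹]]. Let (p_1,q_1),…,(p_s,q_s) be a nonempty list of pairs of positive integers, set p = p_1+⋯+p_s and q = q_1+⋯+q_s, and let M = S₁^{p_1}·(S₂⁻¹)^{q_1}⋯S₁^{p_s}·(S₂⁻¹)^{q_s}. Then the trace of M is a Laurent polynomial whose coefficient of t^i is zero for i > p and for i < -q, and for every integer i with -q ≤ i ≤ p the coefficient of t^i in trace(M) is nonzero with sign (-1)^i (i.e., (-1)^i times this coefficient is strictly positive). In particular trace(M) has no gaps: its support is exactly the integers from -q to p. -/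

import Mathlib

open LaurentPolynomial Pointwise

/-- The image of the braid generator `σ₁` of `B₃` under the reduced Burau representation:
the matrix `[[-t, 1], [0, 1]]` over `ℤ[t,t⁻¹]`. -/
noncomputable def S₁ : Matrix (Fin 2) (Fin 2) (LaurentPolynomial ℤ) :=
  !![-T 1, 1; 0, 1]

/-- The matrix `[[1, 0], [1, -t⁻¹]]` over `ℤ[t,t⁻¹]`, the image of `σ₂⁻¹` under the
reduced Burau representation. -/
noncomputable def S₂inv : Matrix (Fin 2) (Fin 2) (LaurentPolynomial ℤ) :=
  !![1, 0; 1, -T (-1)]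

/-! ### Auxiliary development -/

/-- `(-1)^n tⁿ`. -/
noncomputable def atom (n : ℤ) : LaurentPolynomial ℤ := C (n.negOnePow : ℤ) * T n

/-- `∑_{i<p} (-1)^i tⁱ`. -/
noncomputable def Gs (p : ℕ) : LaurentPolynomial ℤ := ∑ i ∈ Finset.range p, atom i

/-- `∑_{j<q} (-1)^j t⁻ʲ`. -/
noncomputable def Hs (q : ℕ) : LaurentPolynomial ℤ := ∑ j ∈ Finset.range q, atom (-j)

lemma Gs_succ (p : ℕ) : Gs (p + 1) = Gs p + atom p := Finset.sum_range_succ _ _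
lemma Hs_succ (q : ℕ) : Hs (q + 1) = Hs q + atom (-q) := Finset.sum_range_succ _ _

lemma atom_zero : atom 0 = 1 := by simp [atom]

lemma atom_apply (n k : ℤ) : (atom n).coeff k = if n = k then (n.negOnePow : ℤ) else 0 := by
  rw [atom, ← single_eq_C_mul_T]; exact Finsupp.single_apply

lemma atom_mul_negT (n : ℤ) : atom n * (-T 1) = atom (n + 1) := by
  rw [atom, atom, Int.negOnePow_succ]
  push_cast
  rw [map_neg, T_add]
  ring

lemma atom_mul_negTinv (n : ℤ) : atom n * (-T (-1)) = atom (n - 1) := by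
  have h1 : (n - 1 + 1).negOnePow = -(n - 1).negOnePow := Int.negOnePow_succ _
  have h2 : ((n - 1).negOnePow : ℤ) = -(n.negOnePow : ℤ) := by
    have h3 : n.negOnePow = -(n - 1).negOnePow := by rw [← h1]; norm_num
    rw [h3]; push_cast; ring
  rw [atom, atom, h2, show n - 1 = n + (-1) by ring, T_add, map_neg]
  ring

lemma S1_pow (p : ℕ) : S₁ ^ p = !![atom p, Gs p; 0, 1] := by
  induction p with
  | zero => rw [pow_zero, Matrix.one_fin_two]; simp [Gs, atom_zero]
  | succ n ih =>
    have e1 : atom (n : ℤ) * (-T 1) + Gs n * 0 = atom ((n : ℤ) + 1) := by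
      rw [mul_zero, add_zero, atom_mul_negT]
    have e2 : atom (n : ℤ) * 1 + Gs n * 1 = Gs (n + 1) := by
      rw [mul_one, mul_one, Gs_succ]; ring
    rw [pow_succ, ih, S₁, Matrix.mul_fin_two, e1, e2]
    norm_num

lemma S2inv_pow (q : ℕ) : S₂inv ^ q = !![1, 0; Hs q, atom (-q)] := by
  induction q with
  | zero => rw [pow_zero, Matrix.one_fin_two]; simp [Hs, atom_zero]
  | succ n ih =>
    have e1 : Hs n * 1 + atom (-(n:ℤ)) * 1 = Hs (n + 1) := by
      rw [mul_one, mul_one, Hs_succ]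
    have e2 : Hs n * 0 + atom (-(n:ℤ)) * (-T (-1)) = atom (-((n:ℤ) + 1)) := by
      rw [mul_zero, zero_add, atom_mul_negTinv]; congr 1; ring
    rw [pow_succ, ih, S₂inv, Matrix.mul_fin_two, e1, e2]
    norm_num

lemma block_eq (p q : ℕ) : S₁ ^ p * S₂inv ^ q =
    !![atom p + Gs p * Hs q, Gs p * atom (-q); Hs q, atom (-q)] := by
  rw [S1_pow, S2inv_pow, Matrix.mul_fin_two]
  norm_num

/-! ### Sign-alternating positivity predicates -/

/-- all coefficients of `f` have sign `(-1)^k` (weakly). -/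
def NN (f : LaurentPolynomial ℤ) : Prop := ∀ k : ℤ, 0 ≤ (k.negOnePow : ℤ) * f.coeff k

/-- the support of `f` is contained in `[a,b]`. -/
def Spp (f : LaurentPolynomial ℤ) (a b : ℤ) : Prop := ∀ k : ℤ, f.coeff k ≠ 0 → a ≤ k ∧ k ≤ b

/-- strict alternating positivity on `[a,b]`. -/
def Pos (f : LaurentPolynomial ℤ) (a b : ℤ) : Prop :=
  ∀ k : ℤ, a ≤ k → k ≤ b → 0 < (k.negOnePow : ℤ) * f.coeff k

lemma sq_sign (i : ℤ) : (i.negOnePow : ℤ) * (i.negOnePow : ℤ) = 1 := by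
  rw [← Units.val_mul, Int.units_mul_self, Units.val_one]

lemma sign_add (i j : ℤ) : ((i+j).negOnePow : ℤ) = (i.negOnePow : ℤ) * j.negOnePow := by
  rw [Int.negOnePow_add]; push_cast; ring

lemma atom_nn (n : ℤ) : NN (atom n) := by
  intro k; rw [atom_apply]
  split
  · next h => subst h; rw [sq_sign]; norm_num
  · simp

lemma atom_spp (n : ℤ) : Spp (atom n) n n := by
  intro k h; rw [atom_apply] at h
  rcases eq_or_ne n k with rfl | hn
  · exact ⟨le_refl _, le_refl _⟩
  · simp [hn] at h

lemma atom_pos (n : ℤ) : Pos (atom n) n n := by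
  intro k h1 h2
  have : n = k := le_antisymm h1 h2
  subst this; rw [atom_apply, if_pos rfl, sq_sign]; norm_num

lemma NN.add {f g : LaurentPolynomial ℤ} (hf : NN f) (hg : NN g) : NN (f + g) := by
  intro k
  have : (f + g).coeff k = f.coeff k + g.coeff k := rfl
  rw [this, mul_add]
  exact add_nonneg (hf k) (hg k)

lemma Spp.add {f g : LaurentPolynomial ℤ} {a b : ℤ} (hf : Spp f a b) (hg : Spp g a b) :
    Spp (f + g) a b := by
  intro k h
  have : (f + g).coeff k = f.coeff k + g.coeff k := rfl
  rw [this] at h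
  rcases eq_or_ne (f.coeff k) 0 with h0 | h0
  · exact hg k (by rw [h0, zero_add] at h; exact h)
  · exact hf k h0

lemma Spp.mono {f : LaurentPolynomial ℤ} {a b a' b' : ℤ} (hf : Spp f a b)
    (h1 : a' ≤ a) (h2 : b ≤ b') : Spp f a' b' :=
  fun k h => ⟨h1.trans (hf k h).1, (hf k h).2.trans h2⟩

lemma Pos.mono {f : LaurentPolynomial ℤ} {a b a' b' : ℤ} (hf : Pos f a b)
    (h1 : a ≤ a') (h2 : b' ≤ b) : Pos f a' b' :=
  fun k hk1 hk2 => hf k (h1.trans hk1) (hk2.trans h2)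

lemma Pos.add_nn {f g : LaurentPolynomial ℤ} {a b : ℤ} (hf : Pos f a b) (hg : NN g) :
    Pos (f + g) a b := by
  intro k h1 h2
  have : (f + g).coeff k = f.coeff k + g.coeff k := rfl
  rw [this, mul_add]
  exact add_pos_of_pos_of_nonneg (hf k h1 h2) (hg k)

lemma Pos.nn_add {f g : LaurentPolynomial ℤ} {a b : ℤ} (hf : NN f) (hg : Pos g a b) :
    Pos (f + g) a b := by
  rw [add_comm]; exact hg.add_nn hf

/-- glue two adjacent/overlapping positivity intervals. -/
lemma Pos.glue {f g : LaurentPolynomial ℤ} {a b c d : ℤ} (hf : Pos f a b) (hg : Pos g c d)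
    (hnf : NN f) (hng : NN g) (h1 : c ≤ a) (h2 : a ≤ d + 1) : Pos (f + g) c b := by
  intro k hk1 hk2
  have he : (f + g).coeff k = f.coeff k + g.coeff k := rfl
  rw [he, mul_add]
  rcases le_or_gt k d with h | h
  · exact add_pos_of_nonneg_of_pos (hnf k) (hg k hk1 h)
  · exact add_pos_of_pos_of_nonneg (hf k (by omega) hk2) (hng k)

lemma NN.mul {f g : LaurentPolynomial ℤ} (hf : NN f) (hg : NN g) : NN (f * g) := by
  intro k
  rw [AddMonoidAlgebra.mul_apply]
  rw [Finsupp.sum, Finset.mul_sum]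
  apply Finset.sum_nonneg
  intro i _
  rw [Finsupp.sum, Finset.mul_sum]
  apply Finset.sum_nonneg
  intro j _
  rcases eq_or_ne (i + j) k with h | h
  · rw [if_pos h, ← h, sign_add]
    have : (i.negOnePow : ℤ) * (j.negOnePow : ℤ) * (f.coeff i * g.coeff j)
        = ((i.negOnePow : ℤ) * f.coeff i) * ((j.negOnePow : ℤ) * g.coeff j) := by ring
    rw [this]
    exact mul_nonneg (hf i) (hg j)
  · rw [if_neg h, mul_zero]

lemma Spp.mul {f g : LaurentPolynomial ℤ} {a b c d : ℤ} (hf : Spp f a b) (hg : Spp g c d) :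
    Spp (f * g) (a + c) (b + d) := by
  intro k h
  have hk : k ∈ (f * g).coeff.support := Finsupp.mem_support_iff.2 h
  have := AddMonoidAlgebra.support_coeff_mul_subset f g hk
  rw [Finset.mem_add] at this
  obtain ⟨i, hi, j, hj, rfl⟩ := this
  have h1 := hf i (Finsupp.mem_support_iff.1 hi)
  have h2 := hg j (Finsupp.mem_support_iff.1 hj)
  omega

lemma Pos.mul {f g : LaurentPolynomial ℤ} {a b c d : ℤ} (hf : Pos f a b) (hg : Pos g c d)
    (hnf : NN f) (hng : NN g) (hab : a ≤ b) (hcd : c ≤ d) :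
    Pos (f * g) (a + c) (b + d) := by
  intro k hk1 hk2
  set i₀ : ℤ := max a (k - d) with hi₀
  set j₀ : ℤ := k - i₀ with hj₀
  have hia : a ≤ i₀ := le_max_left _ _
  have hib : i₀ ≤ b := by omega
  have hjc : c ≤ j₀ := by omega
  have hjd : j₀ ≤ d := by omega
  have hfi : 0 < (i₀.negOnePow : ℤ) * f.coeff i₀ := hf i₀ hia hib
  have hgj : 0 < (j₀.negOnePow : ℤ) * g.coeff j₀ := hg j₀ hjc hjd
  have hfi0 : f.coeff i₀ ≠ 0 := by intro h; rw [h, mul_zero] at hfi; exact lt_irrefl 0 hfi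
  have hgj0 : g.coeff j₀ ≠ 0 := by intro h; rw [h, mul_zero] at hgj; exact lt_irrefl 0 hgj
  rw [AddMonoidAlgebra.mul_apply, Finsupp.sum, Finset.mul_sum]
  apply Finset.sum_pos'
  · intro i _
    rw [Finsupp.sum, Finset.mul_sum]
    apply Finset.sum_nonneg
    intro j _
    rcases eq_or_ne (i + j) k with h | h
    · rw [if_pos h, ← h, sign_add]
      have : (i.negOnePow : ℤ) * (j.negOnePow : ℤ) * (f.coeff i * g.coeff j)
          = ((i.negOnePow : ℤ) * f.coeff i) * ((j.negOnePow : ℤ) * g.coeff j) := by ring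
      rw [this]
      exact mul_nonneg (hnf i) (hng j)
    · rw [if_neg h, mul_zero]
  · refine ⟨i₀, Finsupp.mem_support_iff.2 hfi0, ?_⟩
    rw [Finsupp.sum, Finset.mul_sum]
    apply Finset.sum_pos'
    · intro j _
      rcases eq_or_ne (i₀ + j) k with h | h
      · rw [if_pos h, ← h, sign_add]
        have : (i₀.negOnePow : ℤ) * (j.negOnePow : ℤ) * (f.coeff i₀ * g.coeff j)
            = ((i₀.negOnePow : ℤ) * f.coeff i₀) * ((j.negOnePow : ℤ) * g.coeff j) := by ring
        rw [this]
        exact mul_nonneg (hnf i₀) (hng j)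
      · rw [if_neg h, mul_zero]
    · refine ⟨j₀, Finsupp.mem_support_iff.2 hgj0, ?_⟩
      have h : i₀ + j₀ = k := by omega
      rw [if_pos h, ← h, sign_add]
      have : (i₀.negOnePow : ℤ) * (j₀.negOnePow : ℤ) * (f.coeff i₀ * g.coeff j₀)
          = ((i₀.negOnePow : ℤ) * f.coeff i₀) * ((j₀.negOnePow : ℤ) * g.coeff j₀) := by ring
      rw [this]
      exact mul_pos hfi hgj

/-! ### Facts about `Gs` and `Hs` -/

lemma Gs_zero : Gs 0 = 0 := Finset.sum_range_zero _
lemma Hs_zero : Hs 0 = 0 := Finset.sum_range_zero _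

lemma gs_nn (p : ℕ) : NN (Gs p) := by
  induction p with
  | zero => intro k; rw [Gs_zero]; simp
  | succ n ih => rw [Gs_succ]; exact ih.add (atom_nn _)

lemma gs_spp (p : ℕ) : Spp (Gs p) 0 ((p : ℤ) - 1) := by
  induction p with
  | zero => intro k h; rw [Gs_zero] at h; simp at h
  | succ n ih =>
    rw [Gs_succ]
    push_cast
    exact (ih.mono le_rfl (by omega)).add ((atom_spp _).mono (by positivity) (by omega))

lemma gs_pos (p : ℕ) : Pos (Gs p) 0 ((p : ℤ) - 1) := by
  induction p with
  | zero => intro k h1 h2; omega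
  | succ n ih =>
    rw [Gs_succ, add_comm]
    push_cast
    have := (atom_pos (n : ℤ)).glue ih (atom_nn _) (gs_nn _) (by positivity) (by omega)
    exact this.mono le_rfl (by omega)

lemma hs_nn (q : ℕ) : NN (Hs q) := by
  induction q with
  | zero => intro k; rw [Hs_zero]; simp
  | succ n ih => rw [Hs_succ]; exact ih.add (atom_nn _)

lemma hs_spp (q : ℕ) : Spp (Hs q) (1 - (q : ℤ)) 0 := by
  induction q with
  | zero => intro k h; rw [Hs_zero] at h; simp at h
  | succ n ih =>
    rw [Hs_succ]
    push_cast
    exact (ih.mono (by omega) le_rfl).add ((atom_spp _).mono (by omega) (by omega))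

lemma hs_pos (q : ℕ) : Pos (Hs q) (1 - (q : ℤ)) 0 := by
  induction q with
  | zero => intro k h1 h2; omega
  | succ n ih =>
    rw [Hs_succ]
    push_cast
    have := ih.glue (atom_pos (-(n : ℤ))) (hs_nn _) (atom_nn _) (by omega) (by omega)
    exact this.mono (by omega) le_rfl

/-! ### The invariant -/

/-- The invariant carried through the product of blocks: all entries are sign-alternating
nonnegative with support in `[-Q, P]`, the `(0,0)` entry is strictly alternating-positive
on `[1-Q, P]`, and the other entries are strictly positive at suitable endpoints. -/
def BInv (M : Matrix (Fin 2) (Fin 2) (LaurentPolynomial ℤ)) (P Q : ℤ) : Prop :=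
  (∀ i j, NN (M i j) ∧ Spp (M i j) (-Q) P) ∧
  Pos (M 0 0) (1 - Q) P ∧ Pos (M 0 1) (-Q) (-Q) ∧
  Pos (M 1 0) (1 - Q) (1 - Q) ∧ Pos (M 1 1) (-Q) (-Q)

lemma binv_block (p q : ℕ) (hp : 1 ≤ p) (hq : 1 ≤ q) :
    BInv (S₁ ^ p * S₂inv ^ q) (p : ℤ) (q : ℤ) := by
  rw [block_eq]
  have hp' : (1 : ℤ) ≤ (p : ℤ) := by exact_mod_cast hp
  have hq' : (1 : ℤ) ≤ (q : ℤ) := by exact_mod_cast hq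
  have nG := gs_nn p
  have nH := hs_nn q
  have nA := atom_nn ((p : ℤ))
  have nAq := atom_nn (-(q : ℤ))
  have sG := gs_spp p
  have sH := hs_spp q
  have pG := gs_pos p
  have pH := hs_pos q
  refine ⟨?_, ?_, ?_, ?_, ?_⟩
  · intro i j
    fin_cases i <;> fin_cases j
    · refine ⟨nA.add (nG.mul nH), ?_⟩
      show Spp (atom p + Gs p * Hs q) (-(q:ℤ)) (p:ℤ)
      have h1 : Spp (atom ((p:ℤ))) (-(q:ℤ)) (p:ℤ) := (atom_spp _).mono (by omega) le_rfl
      have h2 : Spp (Gs p * Hs q) (-(q:ℤ)) (p:ℤ) := (sG.mul sH).mono (by omega) (by omega)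
      exact h1.add h2
    · refine ⟨nG.mul nAq, ?_⟩
      show Spp (Gs p * atom (-(q:ℤ))) (-(q:ℤ)) (p:ℤ)
      exact (sG.mul (atom_spp _)).mono (by omega) (by omega)
    · exact ⟨nH, (sH.mono (by omega) (by omega) : Spp (Hs q) (-(q:ℤ)) (p:ℤ))⟩
    · exact ⟨nAq, ((atom_spp _).mono le_rfl (by omega) : Spp (atom (-(q:ℤ))) (-(q:ℤ)) (p:ℤ))⟩
  · show Pos (atom p + Gs p * Hs q) (1 - (q:ℤ)) (p:ℤ)
    have hGH : Pos (Gs p * Hs q) (0 + (1 - (q:ℤ))) (((p:ℤ) - 1) + 0) :=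
      pG.mul pH nG nH (by omega) (by omega)
    have h := (atom_pos ((p:ℤ))).glue hGH (atom_nn _) (nG.mul nH) (by omega) (by omega)
    exact h.mono (by omega) (by omega)
  · show Pos (Gs p * atom (-(q:ℤ))) (-(q:ℤ)) (-(q:ℤ))
    have h1 : Pos (Gs p) 0 0 := pG.mono le_rfl (by omega)
    have h2 : Pos (Gs p * atom (-(q:ℤ))) (0 + (-(q:ℤ))) (0 + (-(q:ℤ))) :=
      h1.mul (atom_pos _) nG nAq le_rfl le_rfl
    exact h2.mono (by omega) (by omega)
  · show Pos (Hs q) (1 - (q:ℤ)) (1 - (q:ℤ))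
    exact pH.mono le_rfl (by omega)
  · show Pos (atom (-(q:ℤ))) (-(q:ℤ)) (-(q:ℤ))
    exact atom_pos _

lemma mul2 (A B : Matrix (Fin 2) (Fin 2) (LaurentPolynomial ℤ)) (i j : Fin 2) :
    (A * B) i j = A i 0 * B 0 j + A i 1 * B 1 j := by
  rw [Matrix.mul_apply, Fin.sum_univ_two]

lemma binv_step {B M : Matrix (Fin 2) (Fin 2) (LaurentPolynomial ℤ)} {p q P Q : ℤ}
    (hB : BInv B p q) (hM : BInv M P Q) (hp : 1 ≤ p) (hq : 1 ≤ q) (hP : 1 ≤ P) (hQ : 1 ≤ Q) :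
    BInv (B * M) (p + P) (q + Q) := by
  obtain ⟨hBnn, hB00, hB01, hB10, hB11⟩ := hB
  obtain ⟨hMnn, hM00, hM01, hM10, hM11⟩ := hM
  refine ⟨?_, ?_, ?_, ?_, ?_⟩
  · intro i j
    rw [mul2]
    constructor
    · exact ((hBnn i 0).1.mul (hMnn 0 j).1).add ((hBnn i 1).1.mul (hMnn 1 j).1)
    · have s1 : Spp (B i 0 * M 0 j) (-(q + Q)) (p + P) :=
        ((hBnn i 0).2.mul (hMnn 0 j).2).mono (by omega) (by omega)
      have s2 : Spp (B i 1 * M 1 j) (-(q + Q)) (p + P) :=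
        ((hBnn i 1).2.mul (hMnn 1 j).2).mono (by omega) (by omega)
      exact s1.add s2
  · rw [mul2]
    have h1 : Pos (B 0 0 * M 0 0) ((1-q) + (1-Q)) (p + P) :=
      hB00.mul hM00 (hBnn 0 0).1 (hMnn 0 0).1 (by omega) (by omega)
    have h2 : Pos (B 0 1 * M 1 0) ((-q) + (1-Q)) ((-q) + (1-Q)) :=
      hB01.mul hM10 (hBnn 0 1).1 (hMnn 1 0).1 le_rfl le_rfl
    have h := h1.glue h2 ((hBnn 0 0).1.mul (hMnn 0 0).1) ((hBnn 0 1).1.mul (hMnn 1 0).1)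
      (by omega) (by omega)
    exact h.mono (by omega) le_rfl
  · rw [mul2]
    have h2 : Pos (B 0 1 * M 1 1) ((-q) + (-Q)) ((-q) + (-Q)) :=
      hB01.mul hM11 (hBnn 0 1).1 (hMnn 1 1).1 le_rfl le_rfl
    exact Pos.nn_add ((hBnn 0 0).1.mul (hMnn 0 1).1) (h2.mono (by omega) (by omega))
  · rw [mul2]
    have h2 : Pos (B 1 1 * M 1 0) ((-q) + (1-Q)) ((-q) + (1-Q)) :=
      hB11.mul hM10 (hBnn 1 1).1 (hMnn 1 0).1 le_rfl le_rfl
    exact Pos.nn_add ((hBnn 1 0).1.mul (hMnn 0 0).1) (h2.mono (by omega) (by omega))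
  · rw [mul2]
    have h2 : Pos (B 1 1 * M 1 1) ((-q) + (-Q)) ((-q) + (-Q)) :=
      hB11.mul hM11 (hBnn 1 1).1 (hMnn 1 1).1 le_rfl le_rfl
    exact Pos.nn_add ((hBnn 1 0).1.mul (hMnn 0 1).1) (h2.mono (by omega) (by omega))

lemma sums_pos {t : List (ℕ × ℕ)} (ht : t ≠ []) (h : ∀ x ∈ t, 0 < x.1 ∧ 0 < x.2) :
    1 ≤ ((t.map Prod.fst).sum : ℤ) ∧ 1 ≤ ((t.map Prod.snd).sum : ℤ) := by
  obtain ⟨y, t', rfl⟩ := List.exists_cons_of_ne_nil ht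
  have := h y (List.mem_cons_self)
  constructor
  · have h1 : 1 ≤ ((y :: t').map Prod.fst).sum := by
      simp only [List.map_cons, List.sum_cons]; omega
    exact_mod_cast h1
  · have h1 : 1 ≤ ((y :: t').map Prod.snd).sum := by
      simp only [List.map_cons, List.sum_cons]; omega
    exact_mod_cast h1

lemma binv_prod (pq : List (ℕ × ℕ)) (hne : pq ≠ [])
    (hpos : ∀ x ∈ pq, 0 < x.1 ∧ 0 < x.2) :
    BInv ((pq.map fun x => S₁ ^ x.1 * S₂inv ^ x.2).prod)
      ((pq.map Prod.fst).sum : ℤ) ((pq.map Prod.snd).sum : ℤ) := by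
  induction pq with
  | nil => exact absurd rfl hne
  | cons x t ih =>
    have hx := hpos x (List.mem_cons_self)
    rcases eq_or_ne t [] with rfl | ht
    · simp only [List.map_cons, List.map_nil, List.prod_cons, List.prod_nil, mul_one,
        List.sum_cons, List.sum_nil, add_zero]
      exact binv_block x.1 x.2 hx.1 hx.2
    · have hIH := ih ht (fun y hy => hpos y (List.mem_cons_of_mem _ hy))
      have hs := sums_pos ht (fun y hy => hpos y (List.mem_cons_of_mem _ hy))
      simp only [List.map_cons, List.prod_cons, List.sum_cons]
      rw [Nat.cast_add, Nat.cast_add]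
      exact binv_step (binv_block x.1 x.2 hx.1 hx.2) hIH
        (by exact_mod_cast hx.1) (by exact_mod_cast hx.2) hs.1 hs.2

theorem burau_word_trace_no_gaps (pq : List (ℕ × ℕ)) (hne : pq ≠ [])
    (hpos : ∀ x ∈ pq, 0 < x.1 ∧ 0 < x.2) :
    (∀ k : ℤ, ((pq.map Prod.fst).sum : ℤ) < k →
        (Matrix.trace ((pq.map fun x => S₁ ^ x.1 * S₂inv ^ x.2).prod)).coeff k = 0) ∧
    (∀ k : ℤ, k < -((pq.map Prod.snd).sum : ℤ) →
        (Matrix.trace ((pq.map fun x => S₁ ^ x.1 * S₂inv ^ x.2).prod)).coeff k = 0) ∧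
    (∀ k : ℤ, -((pq.map Prod.snd).sum : ℤ) ≤ k → k ≤ ((pq.map Prod.fst).sum : ℤ) →
        0 < (Int.negOnePow k : ℤ) *
          (Matrix.trace ((pq.map fun x => S₁ ^ x.1 * S₂inv ^ x.2).prod)).coeff k) := by
  obtain ⟨hnn, h00, h01, h10, h11⟩ := binv_prod pq hne hpos
  set M := (pq.map fun x => S₁ ^ x.1 * S₂inv ^ x.2).prod with hM
  set P : ℤ := ((pq.map Prod.fst).sum : ℤ) with hP
  set Q : ℤ := ((pq.map Prod.snd).sum : ℤ) with hQ
  have htr : Matrix.trace M = M 0 0 + M 1 1 := Matrix.trace_fin_two M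
  have happ : ∀ k : ℤ, (Matrix.trace M).coeff k = (M 0 0).coeff k + (M 1 1).coeff k := by
    intro k; rw [htr]; rfl
  have hQ1 : 1 ≤ Q := (sums_pos hne hpos).2
  refine ⟨?_, ?_, ?_⟩
  · intro k hk
    rw [happ]
    rcases eq_or_ne ((M 0 0).coeff k) 0 with e0 | e0
    · rcases eq_or_ne ((M 1 1).coeff k) 0 with e1 | e1
      · rw [e0, e1, add_zero]
      · exact absurd ((hnn 1 1).2 k e1).2 (by omega)
    · exact absurd ((hnn 0 0).2 k e0).2 (by omega)
  · intro k hk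
    rw [happ]
    rcases eq_or_ne ((M 0 0).coeff k) 0 with e0 | e0
    · rcases eq_or_ne ((M 1 1).coeff k) 0 with e1 | e1
      · rw [e0, e1, add_zero]
      · exact absurd ((hnn 1 1).2 k e1).1 (by omega)
    · exact absurd ((hnn 0 0).2 k e0).1 (by omega)
  · intro k hk1 hk2
    have hpos2 : Pos (M 0 0 + M 1 1) (-Q) P :=
      h00.glue h11 (hnn 0 0).1 (hnn 1 1).1 (by omega) (by omega)
    have := hpos2 k hk1 hk2
    rw [happ]
    exact this
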